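/- If in addition there exists c ∈ (a,b) such that ϕ'(θ) ≤ 0 for all θ ∈ (a,c] and ϕ'(θ) ≥ 0 for all θ ∈ [c,b), then the function w(θ̃) = u_I'(c)·u_II(θ̃) − u_I(θ̃)·u_II'(c) satisfies w(θ̃)² ≤ 1 for all θ̃ ∈ (a,b). -/

import Mathlib

/-- w(θ̃) = u_I'(c) u_II(θ̃) − u_I(θ̃) u_II'(c) satisfies w(θ̃)² ≤ 1. -/
theorem stmt_8 (a b : ℝ) (hab : a < b)
    (ϕ ϕd uI uId uIdd uII uIId uIIdd : ℝ → ℝ)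
    (hϕd : ∀ θ ∈ Set.Ioo a b, HasDerivAt ϕ (ϕd θ) θ)
    (hϕdc : ContinuousOn ϕd (Set.Ioo a b))
    (hϕpos : ∀ θ ∈ Set.Ioo a b, 0 < ϕ θ)
    (huId : ∀ θ ∈ Set.Ioo a b, HasDerivAt uI (uId θ) θ)
    (huIdd : ∀ θ ∈ Set.Ioo a b, HasDerivAt uId (uIdd θ) θ)
    (huIId : ∀ θ ∈ Set.Ioo a b, HasDerivAt uII (uIId θ) θ)
    (huIIdd : ∀ θ ∈ Set.Ioo a b, HasDerivAt uIId (uIIdd θ) θ)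
    (hodeI : ∀ θ ∈ Set.Ioo a b, uIdd θ + ϕ θ * uI θ = 0)
    (hodeII : ∀ θ ∈ Set.Ioo a b, uIIdd θ + ϕ θ * uII θ = 0)
    (hW : ∀ θ ∈ Set.Ioo a b, uI θ * uIId θ - uId θ * uII θ = 1)
    (c : ℝ) (hc : c ∈ Set.Ioo a b)
    (hdec : ∀ θ ∈ Set.Ioc a c, ϕd θ ≤ 0)
    (hinc : ∀ θ ∈ Set.Ico c b, 0 ≤ ϕd θ) :
    ∀ θt ∈ Set.Ioo a b, (uId c * uII θt - uI θt * uIId c) ^ 2 ≤ 1 := by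
  obtain ⟨hac, hcb⟩ := hc
  set w : ℝ → ℝ := fun θ => uId c * uII θ - uI θ * uIId c with hw_def
  set wd : ℝ → ℝ := fun θ => uId c * uIId θ - uId θ * uIId c with hwd_def
  set E : ℝ → ℝ := fun θ => wd θ ^ 2 / ϕ θ + w θ ^ 2 with hE_def
  have hwD : ∀ θ ∈ Set.Ioo a b, HasDerivAt w (wd θ) θ := fun θ hθ =>
    ((huIId θ hθ).const_mul (uId c)).sub ((huId θ hθ).mul_const (uIId c))
  have hwdD : ∀ θ ∈ Set.Ioo a b, HasDerivAt wd (-(ϕ θ * w θ)) θ := by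
    intro θ hθ
    have h := ((huIIdd θ hθ).const_mul (uId c)).sub ((huIdd θ hθ).mul_const (uIId c))
    refine h.congr_deriv ?_
    have h1 := hodeI θ hθ
    have h2 := hodeII θ hθ
    show _ = -(ϕ θ * (uId c * uII θ - uI θ * uIId c))
    linear_combination uId c * h2 - uIId c * h1
  have hED : ∀ θ ∈ Set.Ioo a b, HasDerivAt E (-(wd θ ^ 2 * ϕd θ) / ϕ θ ^ 2) θ := by
    intro θ hθ
    have hϕne : ϕ θ ≠ 0 := (hϕpos θ hθ).ne'
    have h1 : HasDerivAt (fun θ => wd θ ^ 2) (2 * wd θ * -(ϕ θ * w θ)) θ := by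
      have := (hwdD θ hθ).fun_pow 2
      simpa [mul_comm, mul_assoc] using this
    have h2 : HasDerivAt (fun θ => wd θ ^ 2 / ϕ θ)
        ((2 * wd θ * -(ϕ θ * w θ) * ϕ θ - wd θ ^ 2 * ϕd θ) / ϕ θ ^ 2) θ :=
      h1.div (hϕd θ hθ) hϕne
    have h3 : HasDerivAt (fun θ => w θ ^ 2) (2 * w θ * wd θ) θ := by
      have := (hwD θ hθ).fun_pow 2
      simpa [mul_comm, mul_assoc] using this
    have h4 := h2.add h3
    refine h4.congr_deriv ?_
    rw [div_add' _ _ _ (pow_ne_zero 2 hϕne)]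
    ring
  have hEcont : ContinuousOn E (Set.Ioo a b) := fun θ hθ =>
    ((hED θ hθ).continuousAt).continuousWithinAt
  have hEc : E c = 1 := by
    have hWc := hW c ⟨hac, hcb⟩
    simp only [hE_def, hwd_def, hw_def]
    have hz : uId c * uIId c - uId c * uIId c = 0 := by ring
    rw [hz]
    have : (uId c * uII c - uI c * uIId c) = -1 := by linarith
    rw [this]
    norm_num
  have hsub1 : Set.Ioc a c ⊆ Set.Ioo a b := fun x hx => ⟨hx.1, lt_of_le_of_lt hx.2 hcb⟩
  have hsub2 : Set.Ico c b ⊆ Set.Ioo a b := fun x hx => ⟨lt_of_lt_of_le hac hx.1, hx.2⟩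
  have hmono : MonotoneOn E (Set.Ioc a c) := by
    apply monotoneOn_of_deriv_nonneg (convex_Ioc a c) (hEcont.mono hsub1)
    · intro x hx
      rw [interior_Ioc] at hx
      exact (hED x (hsub1 (Set.Ioo_subset_Ioc_self hx))).differentiableAt.differentiableWithinAt
    · intro x hx
      rw [interior_Ioc] at hx
      have hx' := hsub1 (Set.Ioo_subset_Ioc_self hx)
      rw [(hED x hx').deriv]
      have hϕd0 := hdec x ⟨hx.1, le_of_lt hx.2⟩
      have hm : wd x ^ 2 * ϕd x ≤ 0 := mul_nonpos_of_nonneg_of_nonpos (sq_nonneg _) hϕd0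
      exact div_nonneg (neg_nonneg.mpr hm) (sq_nonneg _)
  have hanti : AntitoneOn E (Set.Ico c b) := by
    apply antitoneOn_of_deriv_nonpos (convex_Ico c b) (hEcont.mono hsub2)
    · intro x hx
      rw [interior_Ico] at hx
      exact (hED x (hsub2 (Set.Ioo_subset_Ico_self hx))).differentiableAt.differentiableWithinAt
    · intro x hx
      rw [interior_Ico] at hx
      have hx' := hsub2 (Set.Ioo_subset_Ico_self hx)
      rw [(hED x hx').deriv]
      have hϕd0 := hinc x ⟨le_of_lt hx.1, hx.2⟩
      have hm : 0 ≤ wd x ^ 2 * ϕd x := mul_nonneg (sq_nonneg _) hϕd0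
      exact div_nonpos_of_nonpos_of_nonneg (neg_nonpos.mpr hm) (sq_nonneg _)
  intro θt hθt
  have hEθ : E θt ≤ 1 := by
    rcases le_or_gt θt c with h | h
    · have := hmono ⟨hθt.1, h⟩ ⟨hac, le_refl c⟩ h
      linarith [hEc ▸ this]
    · have := hanti ⟨le_refl c, hcb⟩ ⟨le_of_lt h, hθt.2⟩ (le_of_lt h)
      linarith [hEc ▸ this]
  have hϕt := hϕpos θt hθt
  have hnn : 0 ≤ wd θt ^ 2 / ϕ θt := div_nonneg (sq_nonneg _) (le_of_lt hϕt)
  have : w θt ^ 2 ≤ E θt := by simp only [hE_def]; linarith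
  calc (uId c * uII θt - uI θt * uIId c) ^ 2 = w θt ^ 2 := rfl
    _ ≤ E θt := this
    _ ≤ 1 := hEθ
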